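/- arXiv:1510.01464 — 4 statements merged into one kernel-verified Lean document; each statement's English description precedes it below -/
import Mathlib

section
/- Let σ ∈ C¹(Ω, Ω) be a measure-preserving reversibility of ż = F(z) on Ω ⊆ ℝⁿ. If there exist z ∈ Ω and t_z > 0 with σ(z) = φ(t_z, z) ≠ z, then the arc of orbit {φ(t, z) : t ∈ [0, t_z]} contains a point z₀ with div F(z₀) = 0. -/
open MeasureTheory Set

variable {N : ℕ}

lemma cont_glue {α : Type*} [TopologicalSpace α] [Zero α]
    {Ω K : Set (Fin N → ℝ)} (hΩ : IsOpen Ω) (hKc : IsClosed K) (hKΩ : K ⊆ Ω)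
    {f : (Fin N → ℝ) → α} (hf : ContinuousOn f Ω) (h0 : ∀ x ∉ K, f x = 0) :
    Continuous f := by
  rw [continuous_iff_continuousAt]
  intro x
  by_cases hx : x ∈ Ω
  · exact hf.continuousAt (hΩ.mem_nhds hx)
  · have hxK : x ∈ Kᶜ := fun h => hx (hKΩ h)
    have h : f =ᶠ[nhds x] fun _ => 0 :=
      Filter.eventually_of_mem (hKc.isOpen_compl.mem_nhds hxK) h0
    exact continuousAt_const.congr h.symm

lemma fderiv_zero_outside {K : Set (Fin N → ℝ)} (hKc : IsClosed K)
    {η : (Fin N → ℝ) → ℝ} (h0 : ∀ x ∉ K, η x = 0) {x} (hx : x ∉ K) :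
    fderiv ℝ η x = 0 := by
  have h : η =ᶠ[nhds x] fun _ => (0 : ℝ) :=
    Filter.eventually_of_mem (hKc.isOpen_compl.mem_nhds hx) h0
  rw [h.fderiv_eq]
  exact fderiv_const_apply 0

lemma sum_fderiv_eval {η : (Fin N → ℝ) → ℝ} {x v : Fin N → ℝ} :
    ∑ i, fderiv ℝ η x (Pi.single i 1) * v i = fderiv ℝ η x v := by
  have hv : v = ∑ i, (v i) • (Pi.single i (1 : ℝ) : Fin N → ℝ) := by
    ext j
    simp [Pi.single_apply]
  conv_rhs => rw [hv]
  rw [map_sum]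
  simp [smul_eq_mul, mul_comm]

lemma ibp {n : ℕ} {Ω : Set (Fin (n+1) → ℝ)} (hΩ : IsOpen Ω)
    {F : (Fin (n+1) → ℝ) → (Fin (n+1) → ℝ)} (hF : ContDiffOn ℝ 1 F Ω)
    {η : (Fin (n+1) → ℝ) → ℝ} (hη : ContDiff ℝ 1 η)
    {K : Set (Fin (n+1) → ℝ)} (hK : IsCompact K) (hKΩ : K ⊆ Ω)
    (hsupp : ∀ x ∉ K, η x = 0) :
    ∫ x, (η x * ∑ i, fderiv ℝ F x (Pi.single i 1) i + fderiv ℝ η x (F x)) = 0 := by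
  obtain ⟨R, hR0, hKR⟩ : ∃ R, 0 < R ∧ K ⊆ Metric.ball 0 R :=
    hK.isBounded.subset_ball_lt 0 0
  set d : (Fin (n+1) → ℝ) → ℝ := fun x => ∑ i, fderiv ℝ F x (Pi.single i 1) i with hd
  set ι : (Fin (n+1) → ℝ) → ℝ := fun x => η x * d x + fderiv ℝ η x (F x) with hι
  set G : (Fin (n+1) → ℝ) → (Fin (n+1) → ℝ) := fun x => η x • F x with hG
  set G' : (Fin (n+1) → ℝ) → ((Fin (n+1) → ℝ) →L[ℝ] (Fin (n+1) → ℝ)) :=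
    fun x => η x • fderiv ℝ F x + (fderiv ℝ η x).smulRight (F x) with hG'
  -- outside K everything vanishes
  have hηK : ∀ x ∉ K, η x = 0 := hsupp
  have hDηK : ∀ x ∉ K, fderiv ℝ η x = 0 := fun x hx =>
    fderiv_zero_outside hK.isClosed hsupp hx
  have hGK : ∀ x ∉ K, G x = 0 := fun x hx => by simp [hG, hηK x hx]
  have hιK : ∀ x ∉ K, ι x = 0 := fun x hx => by
    simp [hι, hηK x hx, hDηK x hx]
  have hG'K : ∀ x ∉ K, G' x = 0 := fun x hx => by
    ext v
    simp [hG', hηK x hx, hDηK x hx]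
  -- derivative everywhere
  have hGd : ∀ x, HasFDerivAt G (G' x) x := by
    intro x
    by_cases hx : x ∈ Ω
    · have h1 : HasFDerivAt η (fderiv ℝ η x) x :=
        (hη.differentiable one_ne_zero x).hasFDerivAt
      have h2 : HasFDerivAt F (fderiv ℝ F x) x :=
        ((hF.differentiableOn one_ne_zero).differentiableAt (hΩ.mem_nhds hx)).hasFDerivAt
      exact h1.smul h2
    · have hxK : x ∉ K := fun h => hx (hKΩ h)
      rw [hG'K x hxK]
      have h : G =ᶠ[nhds x] fun _ => 0 :=
        Filter.eventually_of_mem (hK.isClosed.isOpen_compl.mem_nhds hxK) hGK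
      exact (hasFDerivAt_const (0 : Fin (n+1) → ℝ) x).congr_of_eventuallyEq h
  -- divergence of G equals ι
  have hdiv : ∀ x, (∑ i, G' x (Pi.single i 1) i) = ι x := by
    intro x
    simp only [hG', ContinuousLinearMap.add_apply, ContinuousLinearMap.coe_smul',
      Pi.smul_apply, ContinuousLinearMap.smulRight_apply, Pi.add_apply, smul_eq_mul,
      Finset.sum_add_distrib, hι, hd]
    rw [← Finset.mul_sum, sum_fderiv_eval]
  -- continuity
  have hdcont : ContinuousOn d Ω := by
    apply continuousOn_finset_sum
    intro i _
    have h := hF.continuousOn_fderiv_of_isOpen hΩ le_rfl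
    exact (continuous_apply i).comp_continuousOn (h.clm_apply continuousOn_const)
  have hFc : ContinuousOn F Ω := hF.continuousOn
  have hιcΩ : ContinuousOn ι Ω := by
    refine ((hη.continuous.continuousOn.mul hdcont).add ?_)
    exact ((hη.continuous_fderiv one_ne_zero).continuousOn).clm_apply hFc
  have hιcont : Continuous ι := cont_glue hΩ hK.isClosed hKΩ hιcΩ hιK
  have hGcont : Continuous G :=
    cont_glue hΩ hK.isClosed hKΩ (hη.continuous.continuousOn.smul hFc) hGK
  -- the box
  set a : Fin (n+1) → ℝ := fun _ => -R with ha
  set b : Fin (n+1) → ℝ := fun _ => R with hb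
  have hle : a ≤ b := fun i => by simp [ha, hb]; linarith
  have hKbox : ∀ x ∈ K, ∀ i, x i ∈ Ioo (-R) R := by
    intro x hx i
    have h1 : |x i| ≤ ‖x‖ := by
      have := norm_le_pi_norm x i
      simpa using this
    have h2 : ‖x‖ < R := by
      have := hKR hx
      simpa [Metric.mem_ball, dist_zero_right] using this
    simpa [Set.mem_Ioo] using abs_lt.1 (h1.trans_lt h2)
  have hbig : ∀ (y : Fin (n+1) → ℝ) (i : Fin (n+1)), |y i| = R → G y = 0 := by
    intro y i hyi
    apply hGK
    intro hy
    have h1 : |y i| ≤ ‖y‖ := by simpa using norm_le_pi_norm y i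
    have h2 : ‖y‖ < R := by simpa [Metric.mem_ball, dist_zero_right] using hKR hy
    rw [hyi] at h1
    linarith
  have hnotK : ∀ x ∉ Icc a b, x ∉ K := by
    intro x hx hxK
    apply hx
    rw [Set.mem_Icc]
    refine ⟨fun i => ?_, fun i => ?_⟩ <;>
      have := hKbox x hxK i <;> rw [Set.mem_Ioo] at this
    · exact le_of_lt this.1
    · exact le_of_lt this.2
  have Hi : IntegrableOn (fun x => ∑ i, G' x (Pi.single i 1) i) (Icc a b) := by
    have : (fun x => ∑ i, G' x (Pi.single i 1) i) = ι := funext hdiv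
    rw [this]
    exact hιcont.continuousOn.integrableOn_compact isCompact_Icc
  have key := integral_divergence_of_hasFDerivAt_off_countable a b hle G G' ∅
    Set.countable_empty hGcont.continuousOn (fun x _ => hGd x) Hi
  have hL : (∫ x in Icc a b, ∑ i, G' x (Pi.single i 1) i) =
      ∫ x, (η x * d x + fderiv ℝ η x (F x)) := by
    rw [funext hdiv]
    exact setIntegral_eq_integral_of_forall_compl_eq_zero fun x hx => hιK x (hnotK x hx)
  have hR' : ∀ (i : Fin (n+1)),
      ((∫ x in Icc (a ∘ i.succAbove) (b ∘ i.succAbove), G (i.insertNth (b i) x) i) -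
        ∫ x in Icc (a ∘ i.succAbove) (b ∘ i.succAbove), G (i.insertNth (a i) x) i) = 0 := by
    intro i
    have h1 : ∀ x : Fin n → ℝ, G (i.insertNth (b i) x) i = 0 := by
      intro x
      rw [hbig (i.insertNth (b i) x) i (by simp [Fin.insertNth_apply_same, hb, abs_of_pos hR0])]
      rfl
    have h2 : ∀ x : Fin n → ℝ, G (i.insertNth (a i) x) i = 0 := by
      intro x
      rw [hbig (i.insertNth (a i) x) i (by simp [Fin.insertNth_apply_same, ha, abs_of_pos hR0])]
      rfl
    simp [h1, h2]
  rw [hL] at key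
  rw [key]
  exact Finset.sum_eq_zero fun i _ => hR' i

set_option maxHeartbeats 1000000 in
/-- Theorem 1(i): if σ is a measure-preserving reversibility and
σ(z) = φ(t_z, z) ≠ z with t_z > 0, then the arc of orbit from z to σ(z)
contains a zero-divergence point. -/
theorem arc_contains_zero_divergence {n : ℕ} (Ω : Set (Fin n → ℝ))
    (hΩ : IsOpen Ω) (hconn : IsConnected Ω)
    (F : (Fin n → ℝ) → (Fin n → ℝ)) (hF : ContDiffOn ℝ 1 F Ω)
    (φ : ℝ → (Fin n → ℝ) → (Fin n → ℝ))
    (hmem : ∀ (t : ℝ), ∀ z ∈ Ω, φ t z ∈ Ω)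
    (hφ0 : ∀ z ∈ Ω, φ 0 z = z)
    (hgroup : ∀ (s t : ℝ), ∀ z ∈ Ω, φ (s + t) z = φ s (φ t z))
    (hderiv : ∀ z ∈ Ω, ∀ t : ℝ, HasDerivAt (fun u => φ u z) (F (φ t z)) t)
    (σ : (Fin n → ℝ) → (Fin n → ℝ)) (hσC1 : ContDiffOn ℝ 1 σ Ω)
    (hmaps : Set.MapsTo σ Ω Ω) (hσinv : ∀ z ∈ Ω, σ (σ z) = z)
    (hrev : ∀ (t : ℝ), ∀ z ∈ Ω, φ t (σ z) = σ (φ (-t) z))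
    (hmeas : ∀ A ⊆ Ω, MeasurableSet A → volume (σ '' A) = volume A)
    (z : Fin n → ℝ) (hz : z ∈ Ω) (tz : ℝ) (htz : 0 < tz)
    (hσz : σ z = φ tz z) (hne : φ tz z ≠ z) :
    ∃ t ∈ Set.Icc (0 : ℝ) tz,
      ∑ i : Fin n, fderiv ℝ F (φ t z) (Pi.single i 1) i = 0 := by
  cases n with
  | zero => exact absurd (funext fun i => i.elim0) hne
  | succ k =>
  classical
  -- the midpoint of the arc is a fixed point of σ
  set m := φ (tz/2) z with hm_def
  have hmΩ : m ∈ Ω := hmem _ z hz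
  have hσm : σ m = m := by
    have h := hrev (-(tz/2)) z hz
    rw [neg_neg, hσz, ← hgroup (-(tz/2)) tz z hz] at h
    have e : -(tz/2) + tz = tz/2 := by ring
    rw [e] at h
    exact h.symm
  -- σ is differentiable on Ω
  have hσdiff : ∀ w ∈ Ω, HasFDerivAt σ (fderiv ℝ σ w) w := fun w hw =>
    ((hσC1.contDiffAt (hΩ.mem_nhds hw)).differentiableAt one_ne_zero).hasFDerivAt
  have hσcont : ContinuousOn σ Ω := hσC1.continuousOn
  -- reversibility identity: Dσ(w)(F w) = -F(σ w)
  have hA : ∀ w ∈ Ω, fderiv ℝ σ w (F w) = -F (σ w) := by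
    intro w hw
    have h1 : HasDerivAt (fun t => φ t (σ w)) (F (σ w)) 0 := by
      have := hderiv (σ w) (hmaps hw) 0
      rwa [hφ0 (σ w) (hmaps hw)] at this
    have h0 : HasDerivAt (fun u => φ u w) (F w) 0 := by
      have := hderiv w hw 0
      rwa [hφ0 w hw] at this
    have hneg : HasDerivAt (fun t : ℝ => φ (-t) w) (-F w) 0 := by
      have h0' : HasDerivAt (fun u => φ u w) (F w) (-(0:ℝ)) := by rwa [neg_zero]
      have := h0'.scomp (0:ℝ) (hasDerivAt_neg (0:ℝ))
      simpa [Function.comp_def] using this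
    have h2 : HasDerivAt (fun t => σ (φ (-t) w)) (fderiv ℝ σ w (-F w)) 0 := by
      have hs : HasFDerivAt σ (fderiv ℝ σ w) ((fun t : ℝ => φ (-t) w) 0) := by
        show HasFDerivAt σ (fderiv ℝ σ w) (φ (-(0:ℝ)) w)
        rw [neg_zero, hφ0 w hw]
        exact hσdiff w hw
      exact hs.comp_hasDerivAt 0 hneg
    have heq : (fun t => φ t (σ w)) = fun t => σ (φ (-t) w) := funext fun t => hrev t w hw
    rw [heq] at h1
    have huniq := h1.unique h2
    rw [map_neg] at huniq
    rw [huniq, neg_neg]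
  -- injectivity of σ on subsets of Ω
  have hinj : ∀ s ⊆ Ω, Set.InjOn σ s := by
    intro s hs x hx y hy h
    have := congrArg σ h
    rwa [hσinv x (hs hx), hσinv y (hs hy)] at this
  have hσσ : ∀ s ⊆ Ω, σ '' (σ '' s) = s := by
    intro s hsΩ
    ext x
    constructor
    · rintro ⟨y, ⟨u, hu, rfl⟩, rfl⟩
      rwa [hσinv u (hsΩ hu)]
    · intro hx
      exact ⟨σ x, ⟨x, hx, rfl⟩, hσinv x (hsΩ hx)⟩
  -- |det Dσ| = 1 on Ω
  have hρc : ContinuousOn (fun x => |(fderiv ℝ σ x).det|) Ω :=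
    (ContinuousLinearMap.continuous_det.comp_continuousOn
      (hσC1.continuousOn_fderiv_of_isOpen hΩ le_rfl)).abs
  have hdet : ∀ x ∈ Ω, |(fderiv ℝ σ x).det| = 1 := by
    intro x₀ hx₀
    by_contra hne1
    have hcont : ContinuousAt (fun x => |(fderiv ℝ σ x).det|) x₀ :=
      hρc.continuousAt (hΩ.mem_nhds hx₀)
    rcases lt_or_gt_of_ne hne1 with hlt | hgt
    · set c : ℝ := (|(fderiv ℝ σ x₀).det| + 1) / 2 with hc
      have hc1 : c < 1 := by rw [hc]; linarith
      have hcρ : |(fderiv ℝ σ x₀).det| < c := by rw [hc]; linarith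
      have hev : ∀ᶠ x in nhds x₀, x ∈ Ω ∧ |(fderiv ℝ σ x).det| < c :=
        (hΩ.eventually_mem hx₀).and (hcont.eventually_lt_const hcρ)
      obtain ⟨r, hr0, hball⟩ := Metric.nhds_basis_closedBall.eventually_iff.1 hev
      set A := Metric.closedBall x₀ r with hA'
      have hAΩ : A ⊆ Ω := fun x hx => (hball hx).1
      have hAm : MeasurableSet A := measurableSet_closedBall
      have himg : volume (σ '' A) = volume A := hmeas A hAΩ hAm
      have hlin := lintegral_abs_det_fderiv_eq_addHaar_image volume hAm
        (fun x hx => (hσdiff x (hAΩ hx)).hasFDerivWithinAt) (hinj A hAΩ)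
      have hub : (∫⁻ x in A, ENNReal.ofReal |(fderiv ℝ σ x).det| ∂volume) ≤
          ENNReal.ofReal c * volume A := by
        calc (∫⁻ x in A, ENNReal.ofReal |(fderiv ℝ σ x).det| ∂volume)
            ≤ ∫⁻ _ in A, ENNReal.ofReal c ∂volume := by
              apply lintegral_mono_ae
              rw [ae_restrict_iff' hAm]
              exact Filter.Eventually.of_forall fun x hx =>
                ENNReal.ofReal_le_ofReal (le_of_lt (hball hx).2)
          _ = ENNReal.ofReal c * volume A := setLIntegral_const A _
      have hpos : volume A ≠ 0 := (Metric.measure_closedBall_pos volume x₀ hr0).ne'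
      have hfin : volume A ≠ ⊤ := measure_closedBall_lt_top.ne
      have hlt' : ENNReal.ofReal c * volume A < 1 * volume A := by
        rw [mul_comm (ENNReal.ofReal c) (volume A), mul_comm (1 : ENNReal) (volume A)]; refine ENNReal.mul_lt_mul_right hpos hfin ?_
        exact ENNReal.ofReal_lt_one.2 hc1
      rw [hlin, himg] at hub
      rw [one_mul] at hlt'
      exact absurd (lt_of_le_of_lt hub hlt') (lt_irrefl _)
    · set c : ℝ := (|(fderiv ℝ σ x₀).det| + 1) / 2 with hc
      have hc1 : 1 < c := by rw [hc]; linarith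
      have hcρ : c < |(fderiv ℝ σ x₀).det| := by rw [hc]; linarith
      have hev : ∀ᶠ x in nhds x₀, x ∈ Ω ∧ c < |(fderiv ℝ σ x).det| :=
        (hΩ.eventually_mem hx₀).and (hcont.eventually_const_lt hcρ)
      obtain ⟨r, hr0, hball⟩ := Metric.nhds_basis_closedBall.eventually_iff.1 hev
      set A := Metric.closedBall x₀ r with hA'
      have hAΩ : A ⊆ Ω := fun x hx => (hball hx).1
      have hAm : MeasurableSet A := measurableSet_closedBall
      have himg : volume (σ '' A) = volume A := hmeas A hAΩ hAm
      have hlin := lintegral_abs_det_fderiv_eq_addHaar_image volume hAm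
        (fun x hx => (hσdiff x (hAΩ hx)).hasFDerivWithinAt) (hinj A hAΩ)
      have hub : ENNReal.ofReal c * volume A ≤
          (∫⁻ x in A, ENNReal.ofReal |(fderiv ℝ σ x).det| ∂volume) := by
        calc ENNReal.ofReal c * volume A = ∫⁻ _ in A, ENNReal.ofReal c ∂volume :=
              (setLIntegral_const A _).symm
          _ ≤ ∫⁻ x in A, ENNReal.ofReal |(fderiv ℝ σ x).det| ∂volume := by
              apply lintegral_mono_ae
              rw [ae_restrict_iff' hAm]
              exact Filter.Eventually.of_forall fun x hx =>
                ENNReal.ofReal_le_ofReal (le_of_lt (hball hx).2)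
      have hpos : volume A ≠ 0 := (Metric.measure_closedBall_pos volume x₀ hr0).ne'
      have hfin : volume A ≠ ⊤ := measure_closedBall_lt_top.ne
      have hlt' : 1 * volume A < ENNReal.ofReal c * volume A := by
        rw [mul_comm (ENNReal.ofReal c) (volume A), mul_comm (1 : ENNReal) (volume A)]; refine ENNReal.mul_lt_mul_right hpos hfin ?_
        exact ENNReal.one_lt_ofReal.2 hc1
      rw [hlin, himg] at hub
      rw [one_mul] at hlt'
      exact absurd (lt_of_lt_of_le hlt' hub) (lt_irrefl _)
  -- change of variables
  have hCOV : ∀ s : Set (Fin (k+1) → ℝ), MeasurableSet s → s ⊆ Ω →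
      ∀ g : (Fin (k+1) → ℝ) → ℝ, ∫ x in σ '' s, g x = ∫ x in s, g (σ x) := by
    intro s hsm hsΩ g
    rw [integral_image_eq_integral_abs_det_fderiv_smul volume hsm
      (fun x hx => (hσdiff x (hsΩ hx)).hasFDerivWithinAt) (hinj s hsΩ) g]
    apply setIntegral_congr_fun hsm
    intro x hx
    simp [hdet x (hsΩ hx)]
  -- divergence and its continuity
  set d : (Fin (k+1) → ℝ) → ℝ := fun x => ∑ i, fderiv ℝ F x (Pi.single i 1) i with hd_def
  have hdc : ContinuousOn d Ω := by
    apply continuousOn_finset_sum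
    intro i _
    have h := hF.continuousOn_fderiv_of_isOpen hΩ le_rfl
    exact (continuous_apply i).comp_continuousOn (h.clm_apply continuousOn_const)
  obtain ⟨r₀, hr₀, hball₀⟩ := Metric.nhds_basis_closedBall.mem_iff.1 (hΩ.mem_nhds hmΩ)
  set h : (Fin (k+1) → ℝ) → ℝ := fun y => d (σ y) + d y with hh_def
  have hhc : ContinuousOn h Ω := (hdc.comp hσcont hmaps).add hdc
  have hkey : h m = 0 := by
    by_contra hhm
    have h2 : 0 < h m ^ 2 := by rw [← sq_abs]; exact pow_pos (abs_pos.2 hhm) 2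
    have hcm : ContinuousAt (fun y => h y * h m) m :=
      (hhc.continuousAt (hΩ.mem_nhds hmΩ)).mul continuousAt_const
    have hsq : h m ^ 2 / 2 < (fun y => h y * h m) m := by
      show h m ^ 2 / 2 < h m * h m
      rw [pow_two]
      exact div_lt_self (mul_self_pos.2 hhm) one_lt_two
    have hev : ∀ᶠ y in nhds m, h m ^ 2 / 2 < h y * h m := hcm.eventually_const_lt hsq
    obtain ⟨r₁', hr₁', hball₁⟩ := Metric.nhds_basis_closedBall.eventually_iff.1 hev
    set r₁ := min r₁' r₀ with hr₁_def
    have hr₁ : 0 < r₁ := lt_min hr₁' hr₀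
    set K := Metric.closedBall m r₁ with hK_def
    have hKΩ : K ⊆ Ω := fun x hx =>
      hball₀ (Metric.closedBall_subset_closedBall (min_le_right _ _) hx)
    have hKprop : ∀ y ∈ K, h m ^ 2 / 2 < h y * h m := fun y hy =>
      hball₁ (Metric.closedBall_subset_closedBall (min_le_left _ _) hy)
    set ψ : ContDiffBump m := ⟨r₁/2, r₁, by positivity, by linarith⟩ with hψ_def
    have hψK : ∀ x ∉ K, ψ x = 0 := by
      intro x hx
      apply image_eq_zero_of_notMem_tsupport
      rw [ψ.tsupport_eq]
      exact hx
    have hψC1 : ContDiff ℝ 1 ⇑ψ := ψ.contDiff.of_le (by exact_mod_cast le_top)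
    have hKcomp : IsCompact K := isCompact_closedBall m r₁
    set W := σ '' K with hW_def
    have hWcomp : IsCompact W := hKcomp.image_of_continuousOn (hσcont.mono hKΩ)
    have hWΩ : W ⊆ Ω := by
      rintro x ⟨y, hy, rfl⟩
      exact hmaps (hKΩ hy)
    have hWm : MeasurableSet W := hWcomp.isClosed.measurableSet
    have hσW : σ '' W = K := hσσ K hKΩ
    set χ : (Fin (k+1) → ℝ) → ℝ := fun x => if x ∈ Ω then ψ (σ x) else 0 with hχ_def
    have hχΩ : ∀ x ∈ Ω, χ x = ψ (σ x) := fun x hx => if_pos hx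
    have hχW : ∀ x ∉ W, χ x = 0 := by
      intro x hx
      by_cases hxΩ : x ∈ Ω
      · rw [hχΩ x hxΩ]
        apply hψK
        intro hσx
        exact hx ⟨σ x, hσx, hσinv x hxΩ⟩
      · show (if x ∈ Ω then (ψ (σ x) : ℝ) else 0) = 0
        rw [if_neg hxΩ]
    have hχC1 : ContDiff ℝ 1 χ := by
      rw [contDiff_iff_contDiffAt]
      intro x
      by_cases hxΩ : x ∈ Ω
      · have hcomp : ContDiffAt ℝ 1 (fun y => ψ (σ y)) x :=
          (ψ.contDiff.of_le (by exact_mod_cast le_top)).contDiffAt.comp x (hσC1.contDiffAt (hΩ.mem_nhds hxΩ))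
        apply hcomp.congr_of_eventuallyEq
        exact Filter.eventually_of_mem (hΩ.mem_nhds hxΩ) fun y hy => hχΩ y hy
      · have hxW : x ∉ W := fun hW => hxΩ (hWΩ hW)
        have hce : χ =ᶠ[nhds x] fun _ => 0 :=
          Filter.eventually_of_mem (hWcomp.isClosed.isOpen_compl.mem_nhds hxW) hχW
        exact contDiffAt_const.congr_of_eventuallyEq hce
    have hFc : ContinuousOn F Ω := hF.continuousOn
    have gl : ∀ (f : (Fin (k+1) → ℝ) → ℝ) (S : Set (Fin (k+1) → ℝ)), IsCompact S → S ⊆ Ω →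
        ContinuousOn f Ω → (∀ x ∉ S, f x = 0) → Integrable f volume := by
      intro f S hScomp hSΩ hfc hf0
      have hc : Continuous f := cont_glue hΩ hScomp.isClosed hSΩ hfc hf0
      exact hc.integrable_of_hasCompactSupport (HasCompactSupport.intro hScomp hf0)
    have int1 : Integrable (fun x => ψ x * d x) volume :=
      gl _ K hKcomp hKΩ (ψ.continuous.continuousOn.mul hdc)
        (fun x hx => by rw [hψK x hx, zero_mul])
    have hDψ0 : ∀ x ∉ K, fderiv ℝ (⇑ψ) x = 0 := fun x hx =>
      fderiv_zero_outside hKcomp.isClosed hψK hx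
    have int2 : Integrable (fun x => fderiv ℝ (⇑ψ) x (F x)) volume :=
      gl _ K hKcomp hKΩ (((hψC1.continuous_fderiv one_ne_zero).continuousOn).clm_apply hFc)
        (fun x hx => by rw [hDψ0 x hx]; rfl)
    have hDχ0 : ∀ x ∉ W, fderiv ℝ χ x = 0 := fun x hx =>
      fderiv_zero_outside hWcomp.isClosed hχW hx
    have int3 : Integrable (fun x => χ x * d x) volume :=
      gl _ W hWcomp hWΩ ((hχC1.continuous.continuousOn).mul hdc)
        (fun x hx => by rw [hχW x hx, zero_mul])
    have int4 : Integrable (fun x => fderiv ℝ χ x (F x)) volume :=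
      gl _ W hWcomp hWΩ (((hχC1.continuous_fderiv one_ne_zero).continuousOn).clm_apply hFc)
        (fun x hx => by rw [hDχ0 x hx]; rfl)
    have int5 : Integrable (fun y => d (σ y) * ψ y) volume :=
      gl _ K hKcomp hKΩ ((hdc.comp hσcont hmaps).mul ψ.continuous.continuousOn)
        (fun x hx => by rw [hψK x hx, mul_zero])
    have I1 : ∫ x, (ψ x * d x + fderiv ℝ (⇑ψ) x (F x)) = 0 := ibp hΩ hF hψC1 hKcomp hKΩ hψK
    have I2 : ∫ x, (χ x * d x + fderiv ℝ χ x (F x)) = 0 := ibp hΩ hF hχC1 hWcomp hWΩ hχW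
    have e1 : ∫ x, fderiv ℝ (⇑ψ) x (F x) = -∫ x, ψ x * d x := by
      rw [integral_add int1 int2] at I1
      linarith
    have e2 : ∫ x, χ x * d x = -∫ x, fderiv ℝ χ x (F x) := by
      rw [integral_add int3 int4] at I2
      linarith
    have hfχ : ∀ x ∈ Ω, fderiv ℝ χ x (F x) = -(fderiv ℝ (⇑ψ) (σ x) (F (σ x))) := by
      intro x hx
      have hce : χ =ᶠ[nhds x] fun y => ψ (σ y) :=
        Filter.eventually_of_mem (hΩ.mem_nhds hx) fun y hy => hχΩ y hy
      have hψd : DifferentiableAt ℝ (⇑ψ) (σ x) := (hψC1.differentiable one_ne_zero) (σ x)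
      have hσd : DifferentiableAt ℝ σ x :=
        (hσC1.contDiffAt (hΩ.mem_nhds hx)).differentiableAt one_ne_zero
      have hcc : fderiv ℝ χ x = (fderiv ℝ (⇑ψ) (σ x)).comp (fderiv ℝ σ x) := by
        rw [hce.fderiv_eq]
        exact fderiv_comp x hψd hσd
      rw [hcc]
      show fderiv ℝ (⇑ψ) (σ x) (fderiv ℝ σ x (F x)) = _
      rw [hA x hx, map_neg]
    have S1 : ∫ y, d (σ y) * ψ y = ∫ y in K, d (σ y) * ψ y :=
      (setIntegral_eq_integral_of_forall_compl_eq_zero fun y hy => by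
        rw [hψK y hy, mul_zero]).symm
    have S2 : ∫ y in K, d (σ y) * ψ y = ∫ x in W, χ x * d x := by
      have hc := hCOV W hWm hWΩ (fun y => d (σ y) * ψ y)
      rw [hσW] at hc
      rw [hc]
      apply setIntegral_congr_fun hWm
      intro x hx
      have hxΩ : x ∈ Ω := hWΩ hx
      show d (σ (σ x)) * ψ (σ x) = χ x * d x
      rw [hσinv x hxΩ, hχΩ x hxΩ]
      ring
    have S3 : ∫ x in W, χ x * d x = ∫ x, χ x * d x :=
      setIntegral_eq_integral_of_forall_compl_eq_zero fun x hx => by rw [hχW x hx, zero_mul]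
    have S4 : ∫ x, fderiv ℝ χ x (F x) = ∫ x in W, fderiv ℝ χ x (F x) :=
      (setIntegral_eq_integral_of_forall_compl_eq_zero fun x hx => by
        rw [hDχ0 x hx]; rfl).symm
    have S5 : ∫ x in W, fderiv ℝ χ x (F x) = -∫ x in W, fderiv ℝ (⇑ψ) (σ x) (F (σ x)) := by
      rw [← integral_neg]
      apply setIntegral_congr_fun hWm
      intro x hx
      show fderiv ℝ χ x (F x) = -(fderiv ℝ (⇑ψ) (σ x) (F (σ x)))
      rw [hfχ x (hWΩ hx)]
    have S6 : ∫ x in W, fderiv ℝ (⇑ψ) (σ x) (F (σ x)) = ∫ y in K, fderiv ℝ (⇑ψ) y (F y) := by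
      have hc := hCOV W hWm hWΩ (fun y => fderiv ℝ (⇑ψ) y (F y))
      rw [hσW] at hc
      rw [hc]
    have S7 : ∫ y in K, fderiv ℝ (⇑ψ) y (F y) = ∫ y, fderiv ℝ (⇑ψ) y (F y) :=
      setIntegral_eq_integral_of_forall_compl_eq_zero fun y hy => by rw [hDψ0 y hy]; rfl
    have Etot : ∫ y, d (σ y) * ψ y = -∫ x, ψ x * d x := by
      rw [S1, S2, S3, e2, S4, S5, neg_neg, S6, S7, e1]
    have Ih : ∫ y, h y * ψ y = 0 := by
      have hfun : (fun y => h y * ψ y) = fun y => d (σ y) * ψ y + ψ y * d y := by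
        funext y
        show h y * ψ y = _
        rw [hh_def]
        ring
      rw [hfun, integral_add int5 int1, Etot]
      ring
    have intψ : Integrable (fun y => h m ^ 2 / 2 * ψ y) volume := ψ.integrable.const_mul _
    have inthψ : Integrable (fun y => h y * ψ y) volume :=
      gl _ K hKcomp hKΩ (hhc.mul ψ.continuous.continuousOn)
        (fun y hy => by rw [hψK y hy, mul_zero])
    have inthψ2 : Integrable (fun y => h m * (h y * ψ y)) volume := inthψ.const_mul _
    have hpt : ∀ y, h m ^ 2 / 2 * ψ y ≤ h m * (h y * ψ y) := by
      intro y
      by_cases hy : y ∈ K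
      · have hp1 := hKprop y hy
        have hp2 := ψ.nonneg' y
        nlinarith
      · rw [hψK y hy]
        simp
    have hmono := integral_mono intψ inthψ2 hpt
    rw [integral_const_mul, integral_const_mul, Ih, mul_zero] at hmono
    have hψpos : 0 < ∫ y, ψ y := ψ.integral_pos
    have hcontr := mul_pos (show (0:ℝ) < h m ^ 2 / 2 by linarith) hψpos
    linarith
  have hdm : d m = 0 := by
    have hk : d (σ m) + d m = 0 := hkey
    rw [hσm] at hk
    linarith
  refine ⟨tz/2, ⟨by linarith, by linarith⟩, ?_⟩
  exact hdm
end

section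
/- Let σ ∈ C¹(Ω, Ω) be a measure-preserving reversibility of ż = F(z) on Ω ⊆ ℝⁿ. If z ∈ Ω is a regular point (F(z) ≠ 0) fixed by σ (σ(z) = z), then div F(z) = 0. -/
open MeasureTheory Set

section Helpers


/-- Integral of the divergence of a compactly supported C¹ vector field vanishes. -/
lemma integral_divergence_eq_zero_of_compact_support {m : ℕ}
    (V : (Fin (m+1) → ℝ) → (Fin (m+1) → ℝ)) (hV : ContDiff ℝ 1 V)
    (hsupp : HasCompactSupport V) :
    ∫ x, ∑ i, fderiv ℝ V x (Pi.single i 1) i = 0 := by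
  obtain ⟨R, hR0, hRsub⟩ : ∃ R > 0, tsupport V ⊆ Metric.ball 0 R := by
    rcases hsupp.isCompact.isBounded.subset_ball_lt 0 0 with ⟨R, hR0, hsub⟩
    exact ⟨R, hR0, hsub⟩
  set a : Fin (m+1) → ℝ := fun _ => -R with ha
  set b : Fin (m+1) → ℝ := fun _ => R with hb
  have hle : a ≤ b := fun i => by simp [a, b]; linarith
  have hVz : ∀ x, ‖x‖ ≥ R → V x = 0 := by
    intro x hx
    apply image_eq_zero_of_notMem_tsupport
    intro hmem
    have := hRsub hmem
    rw [Metric.mem_ball, dist_zero_right] at this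
    linarith
  have hdiv0 : ∀ x ∉ tsupport V, fderiv ℝ V x = 0 := by
    intro x hx
    rw [notMem_tsupport_iff_eventuallyEq] at hx
    rw [hx.fderiv_eq]
    exact fderiv_const_apply (0 : Fin (m+1) → ℝ)
  have hfd : Continuous fun x => fderiv ℝ V x := hV.continuous_fderiv one_ne_zero
  have hdivc : Continuous fun x => ∑ i, fderiv ℝ V x (Pi.single i 1) i := by
    apply continuous_finset_sum
    intro i _
    exact (continuous_apply i).comp
      (((ContinuousLinearMap.apply ℝ (Fin (m+1) → ℝ) ((Pi.single i 1 : Fin (m+1) → ℝ))).continuous).comp hfd)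
  have hdivsupp : HasCompactSupport fun x => ∑ i, fderiv ℝ V x (Pi.single i 1) i := by
    apply HasCompactSupport.of_support_subset_isCompact hsupp.isCompact
    intro x hx
    by_contra hmem
    apply hx
    simp [hdiv0 x hmem]
  have key := MeasureTheory.integral_divergence_of_hasFDerivAt_off_countable a b hle V
    (fderiv ℝ V) ∅ Set.countable_empty (hV.continuous.continuousOn)
    (fun x _ => (hV.differentiable one_ne_zero x).hasFDerivAt)
    (hdivc.integrable_of_hasCompactSupport hdivsupp).integrableOn
  have hfaces : ∀ (i : Fin (m+1)) (c : ℝ), |c| = R →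
      ∀ x : Fin m → ℝ, V (i.insertNth c x : Fin (m+1) → ℝ) i = 0 := by
    intro i c hc x
    have h1 : |(i.insertNth c x : Fin (m+1) → ℝ) i| ≤ ‖(i.insertNth c x : Fin (m+1) → ℝ)‖ := by
      simpa using norm_le_pi_norm (i.insertNth c x : Fin (m+1) → ℝ) i
    rw [Fin.insertNth_apply_same] at h1
    have : ‖(i.insertNth c x : Fin (m+1) → ℝ)‖ ≥ R := le_trans (le_of_eq hc.symm) h1
    rw [hVz _ this]; rfl
  rw [← setIntegral_eq_integral_of_forall_compl_eq_zero (s := Set.Icc a b)]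
  · rw [key]
    apply Finset.sum_eq_zero
    intro i _
    have h1 : (∫ x in Icc (a ∘ i.succAbove) (b ∘ i.succAbove),
        V (i.insertNth (b i) x : Fin (m+1) → ℝ) i) = 0 := by
      apply integral_eq_zero_of_ae
      filter_upwards with x using hfaces i (b i) (by simp [hb, abs_of_pos hR0]) x
    have h2 : (∫ x in Icc (a ∘ i.succAbove) (b ∘ i.succAbove),
        V (i.insertNth (a i) x : Fin (m+1) → ℝ) i) = 0 := by
      apply integral_eq_zero_of_ae
      filter_upwards with x using hfaces i (a i) (by simp [ha, abs_of_pos hR0]) x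
    rw [h1, h2, sub_self]
  · intro x hx
    have hxn : x ∉ tsupport V := by
      intro hmem
      apply hx
      have := hRsub hmem
      rw [Metric.mem_ball, dist_zero_right] at this
      constructor <;> intro i <;>
      · have h2 := (norm_le_pi_norm x i).trans this.le
        rw [Real.norm_eq_abs, abs_le] at h2
        simp only [ha, hb]
        linarith [h2.1, h2.2]
    simp [hdiv0 x hxn]

lemma integrableOn_of_compact_support {m : ℕ} {Ω : Set (Fin m → ℝ)} (hΩm : MeasurableSet Ω)
    {h : (Fin m → ℝ) → ℝ} (hc : ContinuousOn h Ω) {K : Set (Fin m → ℝ)}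
    (hK : IsCompact K) (hKΩ : K ⊆ Ω) (h0 : ∀ x ∉ K, h x = 0) :
    IntegrableOn h Ω := by
  have h1 : IntegrableOn h K := (hc.mono hKΩ).integrableOn_compact hK
  have h2 : IntegrableOn h (Ω \ K) :=
    (integrableOn_zero (ε' := ℝ)).congr_fun (fun x hx => (h0 x hx.2).symm)
      (hΩm.diff hK.measurableSet)
  exact (h2.union h1).mono_set fun x hx => by
    by_cases hxK : x ∈ K
    · exact Or.inr hxK
    · exact Or.inl ⟨hx, hxK⟩



lemma eval_sum {m : ℕ} (L : (Fin m → ℝ) →L[ℝ] ℝ) (v : Fin m → ℝ) :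
    L v = ∑ i, L (Pi.single i 1) * v i := by
  have hv : v = ∑ i, v i • (Pi.single i 1 : Fin m → ℝ) := by
    ext j
    simp [Pi.single_apply, Finset.sum_apply]
  calc L v = L (∑ i, v i • (Pi.single i 1 : Fin m → ℝ)) := by rw [← hv]
    _ = ∑ i, L (Pi.single i 1) * v i := by
        rw [map_sum]
        refine Finset.sum_congr rfl fun i _ => ?_
        rw [_root_.map_smul, smul_eq_mul, mul_comm]


/-- Localized integration by parts: if `ψ` is C¹ on `Ω` vanishing outside a compact
subset `K` of `Ω`, and `F` is a C¹ vector field on `Ω`, then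
`∫_Ω (ψ divF + dψ(F)) = 0`. -/
lemma key_ibp {m : ℕ} {Ω : Set (Fin (m+1) → ℝ)} (hΩ : IsOpen Ω)
    {F : (Fin (m+1) → ℝ) → (Fin (m+1) → ℝ)} (hF : ContDiffOn ℝ 1 F Ω)
    {ψ : (Fin (m+1) → ℝ) → ℝ} (hψ : ContDiffOn ℝ 1 ψ Ω)
    {K : Set (Fin (m+1) → ℝ)} (hK : IsCompact K) (hKΩ : K ⊆ Ω)
    (hψ0 : ∀ y ∉ K, ψ y = 0) :
    ∫ y in Ω, (ψ y * (∑ i, fderiv ℝ F y (Pi.single i 1) i) + fderiv ℝ ψ y (F y)) = 0 := by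
  classical
  set V : (Fin (m+1) → ℝ) → (Fin (m+1) → ℝ) := fun y => if y ∈ Ω then ψ y • F y else 0 with hVdef
  have hV0 : ∀ y ∉ K, V y = 0 := by
    intro y hy
    by_cases hyΩ : y ∈ Ω
    · simp [hVdef, hyΩ, hψ0 y hy]
    · simp [hVdef, hyΩ]
  have hVeq : ∀ y ∈ Ω, V y = ψ y • F y := fun y hy => by simp [hVdef, hy]
  have hVev : ∀ y ∈ Ω, V =ᶠ[nhds y] fun x => ψ x • F x :=
    fun y hy => Filter.eventually_of_mem (hΩ.mem_nhds hy) hVeq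
  have hV0ev : ∀ y ∉ K, V =ᶠ[nhds y] fun _ => 0 :=
    fun y hy => Filter.eventually_of_mem (hK.isClosed.isOpen_compl.mem_nhds hy) hV0
  have hVC1 : ContDiff ℝ 1 V := by
    rw [← contDiffOn_univ]
    intro x _
    rw [contDiffWithinAt_univ]
    by_cases hx : x ∈ Ω
    · exact (((hψ.smul hF).contDiffAt (hΩ.mem_nhds hx))).congr_of_eventuallyEq (hVev x hx)
    · exact contDiffAt_const.congr_of_eventuallyEq (hV0ev x fun hxK => hx (hKΩ hxK))
  have hVsupp : HasCompactSupport V := by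
    apply HasCompactSupport.of_support_subset_isCompact hK
    intro x hx
    by_contra hmem
    exact hx (hV0 x hmem)
  have h0 := integral_divergence_eq_zero_of_compact_support V hVC1 hVsupp
  have hdiveq : ∀ y ∈ Ω, ∑ i, fderiv ℝ V y (Pi.single i 1) i
      = ψ y * (∑ i, fderiv ℝ F y (Pi.single i 1) i) + fderiv ℝ ψ y (F y) := by
    intro y hy
    have hψy : HasFDerivAt ψ (fderiv ℝ ψ y) y :=
      ((hψ.differentiableOn one_ne_zero).differentiableAt (hΩ.mem_nhds hy)).hasFDerivAt
    have hFy : HasFDerivAt F (fderiv ℝ F y) y :=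
      ((hF.differentiableOn one_ne_zero).differentiableAt (hΩ.mem_nhds hy)).hasFDerivAt
    have hVy : HasFDerivAt V (ψ y • fderiv ℝ F y + (fderiv ℝ ψ y).smulRight (F y)) y :=
      (hψy.smul hFy).congr_of_eventuallyEq (hVev y hy)
    rw [hVy.fderiv]
    simp only [ContinuousLinearMap.add_apply, ContinuousLinearMap.coe_smul',
      ContinuousLinearMap.smulRight_apply, Pi.add_apply, Pi.smul_apply, smul_eq_mul]
    rw [Finset.sum_add_distrib, ← Finset.mul_sum]
    congr 1
    rw [eval_sum (fderiv ℝ ψ y) (F y)]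
  have hdiv0 : ∀ y ∉ Ω, ∑ i, fderiv ℝ V y (Pi.single i 1) i = 0 := by
    intro y hy
    have hyK : y ∉ K := fun h => hy (hKΩ h)
    have : fderiv ℝ V y = 0 := by
      rw [(hV0ev y hyK).fderiv_eq]
      exact fderiv_const_apply (0 : Fin (m+1) → ℝ)
    simp [this]
  rw [← setIntegral_congr_fun hΩ.measurableSet hdiveq,
    setIntegral_eq_integral_of_forall_compl_eq_zero fun x hx => hdiv0 x hx, h0]

end Helpers

open MeasureTheory

/-- Theorem 1(ii): if σ is a measure-preserving reversibility and z is a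
regular σ-fixed point, then div F(z) = 0. -/

theorem divergence_zero_at_regular_fixed_point {n : ℕ} (Ω : Set (Fin n → ℝ))
    (hΩ : IsOpen Ω) (hconn : IsConnected Ω)
    (F : (Fin n → ℝ) → (Fin n → ℝ)) (hF : ContDiffOn ℝ 1 F Ω)
    (φ : ℝ → (Fin n → ℝ) → (Fin n → ℝ))
    (hmem : ∀ (t : ℝ), ∀ z ∈ Ω, φ t z ∈ Ω)
    (hφ0 : ∀ z ∈ Ω, φ 0 z = z)
    (hgroup : ∀ (s t : ℝ), ∀ z ∈ Ω, φ (s + t) z = φ s (φ t z))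
    (hderiv : ∀ z ∈ Ω, ∀ t : ℝ, HasDerivAt (fun u => φ u z) (F (φ t z)) t)
    (σ : (Fin n → ℝ) → (Fin n → ℝ)) (hσC1 : ContDiffOn ℝ 1 σ Ω)
    (hmaps : Set.MapsTo σ Ω Ω) (hσinv : ∀ z ∈ Ω, σ (σ z) = z)
    (hrev : ∀ (t : ℝ), ∀ z ∈ Ω, φ t (σ z) = σ (φ (-t) z))
    (hmeas : ∀ A ⊆ Ω, MeasurableSet A → volume (σ '' A) = volume A)
    (z : Fin n → ℝ) (hz : z ∈ Ω) (hreg : F z ≠ 0) (hfix : σ z = z) :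
    ∑ i : Fin n, fderiv ℝ F z (Pi.single i 1) i = 0 := by
  classical
  rcases n with - | m
  · exact absurd (funext fun i => i.elim0) hreg
  -- basic facts
  have hΩm : MeasurableSet Ω := hΩ.measurableSet
  have hσdiff : ∀ w ∈ Ω, HasFDerivAt σ (fderiv ℝ σ w) w := fun w hw =>
    ((hσC1.differentiableOn one_ne_zero).differentiableAt (hΩ.mem_nhds hw)).hasFDerivAt
  have hσcont : ContinuousOn σ Ω := hσC1.continuousOn
  have hinj : InjOn σ Ω := fun x hx y hy hxy => by
    rw [← hσinv x hx, hxy, hσinv y hy]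
  have himg : σ '' Ω = Ω :=
    subset_antisymm (image_subset_iff.2 hmaps) fun x hx => ⟨σ x, hmaps hx, hσinv x hx⟩
  have hdivFcont : ContinuousOn (fun x => ∑ i, fderiv ℝ F x (Pi.single i 1) i) Ω := by
    have h1 : ContinuousOn (fun x => fderiv ℝ F x) Ω :=
      hF.continuousOn_fderiv_of_isOpen hΩ le_rfl
    exact continuousOn_finset_sum _ fun i _ =>
      (continuous_apply i).comp_continuousOn (h1.clm_apply continuousOn_const)
  -- Step 1 : Dσ(w) (F w) = - F (σ w)
  have hFσ : ∀ w ∈ Ω, fderiv ℝ σ w (F w) = -F (σ w) := by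
    intro w hw
    have h1 : HasDerivAt (fun u => φ u w) (F w) 0 := by
      have := hderiv w hw 0; rwa [hφ0 w hw] at this
    have h2 : HasDerivAt (fun t : ℝ => -t) (-1) 0 := (hasDerivAt_id (0:ℝ)).neg
    have hc : HasDerivAt (fun t : ℝ => φ (-t) w) (-F w) 0 := by
      have h3 := HasDerivAt.scomp_of_eq (hg := h1) (hh := h2) (hy := by simp)
      simpa [Function.comp_def] using h3
    have h3 : HasDerivAt (fun t : ℝ => σ (φ (-t) w)) (fderiv ℝ σ w (-F w)) 0 := by
      have h3 := HasFDerivAt.comp_hasDerivAt_of_eq (hl := hσdiff w hw) (hf := hc)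
        (hy := by rw [neg_zero, hφ0 w hw])
      simpa [Function.comp_def] using h3
    have h4 : HasDerivAt (fun t : ℝ => φ t (σ w)) (F (σ w)) 0 := by
      have := hderiv (σ w) (hmaps hw) 0
      rwa [hφ0 _ (hmaps hw)] at this
    have heq : (fun t : ℝ => φ t (σ w)) = fun t : ℝ => σ (φ (-t) w) :=
      funext fun t => hrev t w hw
    rw [heq] at h4
    have h5 := h4.unique h3
    rw [map_neg] at h5
    rw [← neg_neg (fderiv ℝ σ w (F w)), ← h5]
  -- Step 2 : |det Dσ| = 1 a.e. on Ω
  have hdetae : ∀ᵐ x ∂(volume.restrict Ω), |(fderiv ℝ σ x).det| = 1 := by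
    have hdcont : ContinuousOn (fun x => fderiv ℝ σ x) Ω :=
      hσC1.continuousOn_fderiv_of_isOpen hΩ le_rfl
    have hcontdet : ContinuousOn (fun x => ENNReal.ofReal |(fderiv ℝ σ x).det|) Ω :=
      (ENNReal.continuous_ofReal.comp
        (continuous_abs.comp ContinuousLinearMap.continuous_det)).comp_continuousOn hdcont
    have hmeasf : AEMeasurable (fun x => ENNReal.ofReal |(fderiv ℝ σ x).det|)
        (volume.restrict Ω) := hcontdet.aemeasurable hΩm
    have key : ∀ s, MeasurableSet s → (volume.restrict Ω) s < ⊤ →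
        ∫⁻ x in s, ENNReal.ofReal |(fderiv ℝ σ x).det| ∂(volume.restrict Ω)
          = ∫⁻ x in s, (1 : ENNReal) ∂(volume.restrict Ω) := by
      intro s hs _
      rw [Measure.restrict_restrict hs]
      have h1 : ∀ x ∈ s ∩ Ω, HasFDerivWithinAt σ (fderiv ℝ σ x) (s ∩ Ω) x :=
        fun x hx => (hσdiff x hx.2).hasFDerivWithinAt
      rw [lintegral_abs_det_fderiv_eq_addHaar_image volume (hs.inter hΩm) h1
        (hinj.mono inter_subset_right),
        hmeas _ inter_subset_right (hs.inter hΩm), setLIntegral_one]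
    have := ae_eq_of_forall_setLIntegral_eq_of_sigmaFinite₀ hmeasf aemeasurable_const key
    filter_upwards [this] with x hx
    exact ENNReal.ofReal_eq_one.1 hx
  -- Step 3 : change of variables
  have cov : ∀ h : (Fin (m+1) → ℝ) → ℝ, ∫ x in Ω, h x = ∫ x in Ω, h (σ x) := by
    intro h
    have h1 : ∀ x ∈ Ω, HasFDerivWithinAt σ (fderiv ℝ σ x) Ω x :=
      fun x hx => (hσdiff x hx).hasFDerivWithinAt
    have h2 := integral_image_eq_integral_abs_det_fderiv_smul volume hΩm h1 hinj h
    rw [himg] at h2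
    rw [h2]
    apply integral_congr_ae
    filter_upwards [hdetae] with x hx
    rw [hx, one_smul]
  -- Step 4 : distributional identity
  have hcontf : ContinuousOn
      (fun x => (∑ i, fderiv ℝ F (σ x) (Pi.single i 1) i) + ∑ i, fderiv ℝ F x (Pi.single i 1) i)
      Ω := (hdivFcont.comp hσcont hmaps).add hdivFcont
  have main : ∀ᵐ x, x ∈ Ω →
      (∑ i, fderiv ℝ F (σ x) (Pi.single i 1) i) + (∑ i, fderiv ℝ F x (Pi.single i 1) i) = 0 := by
    apply hΩ.ae_eq_zero_of_integral_contDiff_smul_eq_zero (hcontf.locallyIntegrableOn hΩm)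
    intro g hg hgsupp hgΩ
    have hg1 : ContDiff ℝ 1 g := hg.of_le (mod_cast le_top)
    have hKcomp : IsCompact (tsupport g) := hgsupp
    have hKΩ : tsupport g ⊆ Ω := hgΩ
    have hK'comp : IsCompact (σ '' tsupport g) := hKcomp.image_of_continuousOn (hσcont.mono hKΩ)
    have hK'Ω : σ '' tsupport g ⊆ Ω := by
      rintro x ⟨y, hy, rfl⟩
      exact hmaps (hKΩ hy)
    set ψ : (Fin (m+1) → ℝ) → ℝ := fun y => if y ∈ Ω then g (σ y) else 0 with hψdef
    have ψeq : ∀ y ∈ Ω, ψ y = g (σ y) := fun y hy => by simp [hψdef, hy]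
    have ψ0 : ∀ y ∉ σ '' tsupport g, ψ y = 0 := by
      intro y hy
      by_cases hyΩ : y ∈ Ω
      · rw [ψeq y hyΩ]
        apply image_eq_zero_of_notMem_tsupport
        intro hmem
        exact hy ⟨σ y, hmem, hσinv y hyΩ⟩
      · simp [hψdef, hyΩ]
    have ψσ : ∀ x ∈ Ω, ψ (σ x) = g x := fun x hx => by
      rw [ψeq _ (hmaps hx), hσinv x hx]
    have hψC1 : ContDiffOn ℝ 1 ψ Ω :=
      (hg1.comp_contDiffOn hσC1).congr fun y hy => ψeq y hy
    have hψd : ∀ y ∈ Ω, fderiv ℝ ψ y = (fderiv ℝ g (σ y)).comp (fderiv ℝ σ y) := by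
      intro y hy
      have hgd : HasFDerivAt g (fderiv ℝ g (σ y)) (σ y) :=
        (hg1.differentiable one_ne_zero (σ y)).hasFDerivAt
      have hcomp := hgd.comp y (hσdiff y hy)
      have hev : ψ =ᶠ[nhds y] g ∘ σ :=
        Filter.eventually_of_mem (hΩ.mem_nhds hy) fun x hx => by
          simp [hψdef, hx, Function.comp]
      exact (hcomp.congr_of_eventuallyEq hev).fderiv
    have hpq : ∀ y ∈ Ω, fderiv ℝ ψ y (F y) = -(fderiv ℝ g (σ y) (F (σ y))) := by
      intro y hy
      rw [hψd y hy, ContinuousLinearMap.comp_apply, hFσ y hy, map_neg]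
    have hfg0 : ∀ x ∉ tsupport g, fderiv ℝ g x = 0 := by
      intro x hx
      exact Function.notMem_support.1 fun h => hx (support_fderiv_subset ℝ h)
    -- the two integration-by-parts identities
    have I1 := key_ibp hΩ hF hψC1 hK'comp hK'Ω ψ0
    have I2 := key_ibp hΩ hF hg1.contDiffOn hKcomp hKΩ
      (fun y hy => image_eq_zero_of_notMem_tsupport hy)
    -- change of variables on the first one
    have E1 : ∫ x in Ω,
        (g x * (∑ i, fderiv ℝ F (σ x) (Pi.single i 1) i) - fderiv ℝ g x (F x)) = 0 := by
      have h1 := cov (fun y => ψ y * (∑ i, fderiv ℝ F y (Pi.single i 1) i) + fderiv ℝ ψ y (F y))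
      rw [I1] at h1
      refine Eq.trans ?_ h1.symm
      apply setIntegral_congr_fun hΩm
      intro x hx
      have e1 := ψσ x hx
      have e2 := hpq (σ x) (hmaps hx)
      rw [hσinv x hx] at e2
      simp only [e1, e2]
      ring
    -- sum the two identities
    have intA : IntegrableOn
        (fun x => g x * (∑ i, fderiv ℝ F (σ x) (Pi.single i 1) i) - fderiv ℝ g x (F x)) Ω := by
      apply integrableOn_of_compact_support hΩm _ hKcomp hKΩ
      · intro x hx
        rw [image_eq_zero_of_notMem_tsupport hx, hfg0 x hx]
        simp
      · exact ((hg1.continuous.continuousOn.mul (hdivFcont.comp hσcont hmaps)).sub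
          (((hg1.continuous_fderiv one_ne_zero).continuousOn).clm_apply hF.continuousOn))
    have intB : IntegrableOn
        (fun x => g x * (∑ i, fderiv ℝ F x (Pi.single i 1) i) + fderiv ℝ g x (F x)) Ω := by
      apply integrableOn_of_compact_support hΩm _ hKcomp hKΩ
      · intro x hx
        rw [image_eq_zero_of_notMem_tsupport hx, hfg0 x hx]
        simp
      · exact ((hg1.continuous.continuousOn.mul hdivFcont).add
          (((hg1.continuous_fderiv one_ne_zero).continuousOn).clm_apply hF.continuousOn))
    have hsum := integral_add intA intB
    rw [E1, I2, add_zero] at hsum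
    have final : ∫ x in Ω,
        g x • ((∑ i, fderiv ℝ F (σ x) (Pi.single i 1) i)
          + ∑ i, fderiv ℝ F x (Pi.single i 1) i) = 0 := by
      refine Eq.trans ?_ hsum
      apply setIntegral_congr_fun hΩm
      intro x _
      simp only [smul_eq_mul]
      ring
    rw [← setIntegral_eq_integral_of_forall_compl_eq_zero (s := Ω)
      (fun x hx => by rw [image_eq_zero_of_notMem_tsupport fun hm => hx (hKΩ hm), zero_smul])]
    exact final
  -- Step 5 : from a.e. to the point z
  have hfz : (∑ i, fderiv ℝ F (σ z) (Pi.single i 1) i)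
      + (∑ i, fderiv ℝ F z (Pi.single i 1) i) = 0 := by
    by_contra hne
    have hca : ContinuousAt
        (fun x => (∑ i, fderiv ℝ F (σ x) (Pi.single i 1) i)
          + ∑ i, fderiv ℝ F x (Pi.single i 1) i) z :=
      hcontf.continuousAt (hΩ.mem_nhds hz)
    have hev := hca.eventually_ne hne
    have hnhds : ({x | (∑ i, fderiv ℝ F (σ x) (Pi.single i 1) i)
        + (∑ i, fderiv ℝ F x (Pi.single i 1) i) ≠ 0} ∩ Ω) ∈ nhds z :=
      Filter.inter_mem hev (hΩ.mem_nhds hz)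
    have hpos : 0 < volume ({x | (∑ i, fderiv ℝ F (σ x) (Pi.single i 1) i)
        + (∑ i, fderiv ℝ F x (Pi.single i 1) i) ≠ 0} ∩ Ω) := by
      have hz' := mem_interior_iff_mem_nhds.2 hnhds
      exact lt_of_lt_of_le (isOpen_interior.measure_pos volume ⟨z, hz'⟩)
        (measure_mono interior_subset)
    rw [ae_iff] at main
    have hsub : ({x | (∑ i, fderiv ℝ F (σ x) (Pi.single i 1) i)
        + (∑ i, fderiv ℝ F x (Pi.single i 1) i) ≠ 0} ∩ Ω)
        ⊆ {a | ¬(a ∈ Ω → (∑ i, fderiv ℝ F (σ a) (Pi.single i 1) i)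
          + (∑ i, fderiv ℝ F a (Pi.single i 1) i) = 0)} :=
      fun x hx himp => hx.1 (himp hx.2)
    have hnull := measure_mono_null hsub main
    exact absurd hnull hpos.ne'
  rw [hfix] at hfz
  linarith
end

section
/- Let σ be a mirror symmetry of ż = F(z) on ℝⁿ, i.e. the reflection across a hyperplane H which is a measure-preserving reversibility of the system. Then at every regular point z ∈ H (F(z) ≠ 0) one has div F(z) = 0; in particular the regular part of the symmetry hyperplane is contained in the zero-divergence set of F. -/
open MeasureTheory

/-- Corollary: if the reflection σ across a hyperplane H is a reversibility of
ż = F(z), then at every regular point of H the divergence of F vanishes; i.e.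
the regular part of the symmetry hyperplane lies in the zero-divergence set. -/
theorem mirror_symmetry_hyperplane_zero_divergence {n : ℕ}
    (Ω : Set (EuclideanSpace ℝ (Fin n))) (hΩ : IsOpen Ω)
    (hconn : IsConnected Ω)
    (F : EuclideanSpace ℝ (Fin n) → EuclideanSpace ℝ (Fin n))
    (hF : ContDiffOn ℝ 1 F Ω)
    (φ : ℝ → EuclideanSpace ℝ (Fin n) → EuclideanSpace ℝ (Fin n))
    (hmem : ∀ (t : ℝ), ∀ z ∈ Ω, φ t z ∈ Ω)
    (hφ0 : ∀ z ∈ Ω, φ 0 z = z)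
    (hgroup : ∀ (s t : ℝ), ∀ z ∈ Ω, φ (s + t) z = φ s (φ t z))
    (hderiv : ∀ z ∈ Ω, ∀ t : ℝ, HasDerivAt (fun u => φ u z) (F (φ t z)) t)
    -- the hyperplane H through p with unit normal u, and the reflection σ
    (p u : EuclideanSpace ℝ (Fin n)) (hu : ‖u‖ = 1)
    (H : Set (EuclideanSpace ℝ (Fin n)))
    (hH : H = {z | inner ℝ (z - p) u = (0 : ℝ)})
    (σ : EuclideanSpace ℝ (Fin n) → EuclideanSpace ℝ (Fin n))
    (hσ : ∀ z, σ z = z - (2 * (inner ℝ (z - p) u : ℝ)) • u)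
    (hΩinv : Set.MapsTo σ Ω Ω)
    (hrev : ∀ (t : ℝ), ∀ z ∈ Ω, φ t (σ z) = σ (φ (-t) z)) :
    ∀ z ∈ H ∩ Ω, F z ≠ 0 →
      ∑ i : Fin n, fderiv ℝ F z (EuclideanSpace.single i 1) i = 0 := by
  intro z hz _hFz
  obtain ⟨hzH, hzΩ⟩ := hz
  have hz0 : (inner ℝ (z - p) u : ℝ) = 0 := by rw [hH] at hzH; exact hzH
  have hσz : σ z = z := by rw [hσ z, hz0]; simp
  -- the reflection as a continuous linear map
  set R : EuclideanSpace ℝ (Fin n) →L[ℝ] EuclideanSpace ℝ (Fin n) :=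
    ContinuousLinearMap.id ℝ _ - ((2 : ℝ) • (innerSL ℝ u)).smulRight u with hRdef
  have hRapp : ∀ v, R v = v - (2 * (inner ℝ u v : ℝ)) • u := by
    intro v
    simp [hRdef]
  -- σ is differentiable everywhere with derivative R
  have hσderiv : ∀ w, HasFDerivAt σ R w := by
    intro w
    have h1 : HasFDerivAt (fun z : EuclideanSpace ℝ (Fin n) => (inner ℝ (z - p) u : ℝ))
        (innerSL ℝ u) w := by
      have h0 : HasFDerivAt (fun z : EuclideanSpace ℝ (Fin n) => (inner ℝ u (z - p) : ℝ))
          ((innerSL ℝ u).comp (ContinuousLinearMap.id ℝ _)) w :=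
        (innerSL ℝ u).hasFDerivAt.comp w ((hasFDerivAt_id w).sub_const p)
      simp only [ContinuousLinearMap.comp_id] at h0
      have : (fun z : EuclideanSpace ℝ (Fin n) => (inner ℝ (z - p) u : ℝ))
          = fun z => (inner ℝ u (z - p) : ℝ) := by
        funext v; exact real_inner_comm _ _
      rw [this]; exact h0
    have h2 : HasFDerivAt
        (fun z : EuclideanSpace ℝ (Fin n) => (2 * (inner ℝ (z - p) u : ℝ)) • u)
        (((2 : ℝ) • (innerSL ℝ u)).smulRight u) w :=
      (h1.const_mul (2 : ℝ)).smul_const u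
    have h3 := (hasFDerivAt_id w).sub h2
    exact h3.congr_of_eventuallyEq (Filter.Eventually.of_forall hσ)
  -- differentiating the reversibility in t at t = 0:  F ∘ σ = - R ∘ F on Ω
  have hkey : ∀ w ∈ Ω, F (σ w) = -(R (F w)) := by
    intro w hw
    have h1 : HasDerivAt (fun t => φ t (σ w)) (F (σ w)) 0 := by
      have h := hderiv (σ w) (hΩinv hw) 0
      rwa [hφ0 (σ w) (hΩinv hw)] at h
    have hneg : HasDerivAt (fun t : ℝ => φ (-t) w) ((-1 : ℝ) • F w) 0 := by
      have h := hderiv w hw 0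
      rw [hφ0 w hw] at h
      exact h.scomp_of_eq 0 (hasDerivAt_neg (0 : ℝ)) (by simp)
    have h2 : HasDerivAt (fun t : ℝ => σ (φ (-t) w)) (R ((-1 : ℝ) • F w)) 0 :=
      (hσderiv _).comp_hasDerivAt 0 hneg
    have hfun : (fun t => φ t (σ w)) = fun t : ℝ => σ (φ (-t) w) := by
      funext t; exact hrev t w hw
    rw [hfun] at h1
    have := h1.unique h2
    rw [this, R.map_smul]
    simp
  -- differentiate in z at the fixed point z of σ
  have hFz' : DifferentiableAt ℝ F z :=
    (hF.differentiableOn one_ne_zero).differentiableAt (hΩ.mem_nhds hzΩ)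
  set A := fderiv ℝ F z with hA
  have h1 : HasFDerivAt (fun w => F (σ w)) (A.comp R) z := by
    have hFd : HasFDerivAt F A (σ z) := by rw [hσz]; exact hFz'.hasFDerivAt
    exact hFd.comp z (hσderiv z)
  have h2 : HasFDerivAt (fun w => -(R (F w))) (-(R.comp A)) z :=
    (R.hasFDerivAt.comp z hFz'.hasFDerivAt).neg
  have heq : A.comp R = -(R.comp A) := by
    have hev : (fun w => F (σ w)) =ᶠ[nhds z] fun w => -(R (F w)) :=
      Filter.eventuallyEq_of_mem (hΩ.mem_nhds hzΩ) fun w hw => hkey w hw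
    calc A.comp R = fderiv ℝ (fun w => F (σ w)) z := h1.fderiv.symm
      _ = fderiv ℝ (fun w => -(R (F w))) z := hev.fderiv_eq
      _ = -(R.comp A) := h2.fderiv
  -- pointwise, coordinatewise consequence
  have hptw : ∀ v (i : Fin n), A v i
      = (inner ℝ u v : ℝ) * A u i + (inner ℝ u (A v) : ℝ) * u i := by
    intro v i
    have h := congrArg (fun T : EuclideanSpace ℝ (Fin n) →L[ℝ] EuclideanSpace ℝ (Fin n) => T v) heq
    simp only [ContinuousLinearMap.comp_apply, ContinuousLinearMap.neg_apply] at h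
    rw [hRapp v, hRapp (A v), map_sub, A.map_smul] at h
    have h' := congrArg (fun w : EuclideanSpace ℝ (Fin n) => w i) h
    simp only [PiLp.sub_apply, PiLp.smul_apply, PiLp.neg_apply, smul_eq_mul] at h'
    linarith
  -- ⟨u, A u⟩ = 0
  have huu : (inner ℝ u u : ℝ) = 1 := by
    rw [real_inner_self_eq_norm_sq, hu]; norm_num
  have hu0 : u ≠ 0 := by
    intro h; rw [h] at hu; simp at hu
  have hc : (inner ℝ u (A u) : ℝ) = 0 := by
    obtain ⟨i, hi⟩ : ∃ i, u i ≠ 0 := by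
      by_contra h
      push_neg at h
      exact hu0 (PiLp.ext fun i => by simp [h i])
    have h := hptw u i
    rw [huu] at h
    have : (inner ℝ u (A u) : ℝ) * u i = 0 := by linarith
    exact (mul_eq_zero.mp this).resolve_right hi
  -- sum identity: u = ∑ i, u i • eᵢ
  have hsumu : ∑ i : Fin n, u i • EuclideanSpace.single i (1 : ℝ) = u := by
    have h := (EuclideanSpace.basisFun (Fin n) ℝ).sum_repr u
    simpa [EuclideanSpace.basisFun_apply, EuclideanSpace.basisFun_repr] using h
  -- put everything together
  have hS1 : ∑ i : Fin n, u i * A u i = (inner ℝ u (A u) : ℝ) := by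
    rw [PiLp.inner_apply]
    simp [mul_comm]
  have hS2 : ∑ i : Fin n, (inner ℝ u (A (EuclideanSpace.single i (1 : ℝ))) : ℝ) * u i
      = (inner ℝ u (A u) : ℝ) := by
    have : ∀ i : Fin n, (inner ℝ u (A (EuclideanSpace.single i (1 : ℝ))) : ℝ) * u i
        = (inner ℝ u (u i • A (EuclideanSpace.single i (1 : ℝ))) : ℝ) := by
      intro i; rw [real_inner_smul_right]; ring
    rw [Finset.sum_congr rfl fun i _ => this i, ← inner_sum]
    congr 1
    calc ∑ i : Fin n, u i • A (EuclideanSpace.single i (1 : ℝ))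
        = ∑ i : Fin n, A (u i • EuclideanSpace.single i (1 : ℝ)) := by
          simp [A.map_smul]
      _ = A (∑ i : Fin n, u i • EuclideanSpace.single i (1 : ℝ)) :=
          (map_sum A (fun i => u i • EuclideanSpace.single i (1 : ℝ)) Finset.univ).symm
      _ = A u := by rw [hsumu]
  calc ∑ i : Fin n, A (EuclideanSpace.single i 1) i
      = ∑ i : Fin n, ((inner ℝ u (EuclideanSpace.single i (1 : ℝ)) : ℝ) * A u i
        + (inner ℝ u (A (EuclideanSpace.single i (1 : ℝ))) : ℝ) * u i) :=
        Finset.sum_congr rfl fun i _ => hptw (EuclideanSpace.single i 1) i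
    _ = ∑ i : Fin n, u i * A u i
        + ∑ i : Fin n, (inner ℝ u (A (EuclideanSpace.single i (1 : ℝ))) : ℝ) * u i := by
        rw [Finset.sum_add_distrib]
        congr 1
        refine Finset.sum_congr rfl fun i _ => ?_
        rw [EuclideanSpace.inner_single_right]
        simp
    _ = 0 := by rw [hS1, hS2, hc]; ring
end

section
/- Let F(x,y) = (r(x)y + s(x), −g(x) − f(x)y − h(x)y²) with r, s, f, g, h ∈ C¹(a,b), r(x) ≠ 0 on (a,b), and suppose r f − 2hs − s′r + sr′ ≡ 0. Define σ(x,y) = (x, −2s(x)/r(x) − y). Then σ is an involution and F(σ(x,y)) = −J_σ(x,y)·F(x,y) for all (x,y) ∈ (a,b) × ℝ; i.e. the system is σ-reversible. -/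
/-- Theorem 2 (teoquadra): under condition rf − 2hs − s′r + sr′ ≡ 0 with
r ≠ 0, the map σ(x,y) = (x, −2s(x)/r(x) − y) is an involution and the
y-quadratic system is σ-reversible: F(σ(p)) = −J_σ(p)·F(p). -/
theorem y_quadratic_reversible {a b : ℝ} (r s f g h s' r' : ℝ → ℝ)
    (hr : ∀ x ∈ Set.Ioo a b, HasDerivAt r (r' x) x)
    (hs : ∀ x ∈ Set.Ioo a b, HasDerivAt s (s' x) x)
    (hrC : ContDiffOn ℝ 1 r (Set.Ioo a b))
    (hsC : ContDiffOn ℝ 1 s (Set.Ioo a b))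
    (hfC : ContDiffOn ℝ 1 f (Set.Ioo a b))
    (hgC : ContDiffOn ℝ 1 g (Set.Ioo a b))
    (hhC : ContDiffOn ℝ 1 h (Set.Ioo a b))
    (hrne : ∀ x ∈ Set.Ioo a b, r x ≠ 0)
    (hcond : ∀ x ∈ Set.Ioo a b,
      r x * f x - 2 * h x * s x - s' x * r x + s x * r' x = 0)
    (F : ℝ × ℝ → ℝ × ℝ)
    (hFdef : ∀ p : ℝ × ℝ,
      F p = (r p.1 * p.2 + s p.1, -g p.1 - f p.1 * p.2 - h p.1 * p.2 ^ 2))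
    (σ : ℝ × ℝ → ℝ × ℝ)
    (hσ : ∀ p : ℝ × ℝ, σ p = (p.1, -(2 * s p.1 / r p.1) - p.2)) :
    (∀ p ∈ Set.Ioo a b ×ˢ (Set.univ : Set ℝ), σ (σ p) = p) ∧
    (∀ p ∈ Set.Ioo a b ×ˢ (Set.univ : Set ℝ),
      F (σ p) = -(fderiv ℝ σ p (F p))) := by
  have hσeq : σ = fun p : ℝ × ℝ => (p.1, -(2 * s p.1 / r p.1) - p.2) := funext hσ
  constructor
  · rintro ⟨x, y⟩ hp
    rw [hσ, hσ]
    simp only [Prod.mk.injEq]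
    exact ⟨trivial, by ring⟩
  · rintro ⟨x, y⟩ hp
    obtain ⟨hx, -⟩ := Set.mem_prod.mp hp
    have hrx := hrne x hx
    set c := -((2 * s' x * r x - 2 * s x * r' x) / (r x) ^ 2) with hc
    have hder : HasDerivAt (fun t => -(2 * s t / r t)) c x := by
      have h1 : HasDerivAt (fun t => 2 * s t) (2 * s' x) x := (hs x hx).const_mul 2
      exact (h1.div (hr x hx) hrx).neg
    have hF : HasFDerivAt σ
        ((ContinuousLinearMap.fst ℝ ℝ ℝ).prod
          (c • ContinuousLinearMap.fst ℝ ℝ ℝ - ContinuousLinearMap.snd ℝ ℝ ℝ))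
        (x, y) := by
      rw [hσeq]
      exact HasFDerivAt.prodMk (hasFDerivAt_fst)
        ((HasDerivAt.comp_hasFDerivAt (h₂ := fun t => -(2 * s t / r t)) (f := Prod.fst) (x, y) hder hasFDerivAt_fst : HasFDerivAt (fun p : ℝ × ℝ => -(2 * s p.1 / r p.1)) (c • ContinuousLinearMap.fst ℝ ℝ ℝ) (x, y)).sub hasFDerivAt_snd)
    rw [hF.fderiv, hσ, hFdef, hFdef]
    have hcx := hcond x hx
    simp only [ContinuousLinearMap.prod_apply, ContinuousLinearMap.coe_fst',
      ContinuousLinearMap.coe_snd', ContinuousLinearMap.sub_apply,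
      ContinuousLinearMap.smul_apply, smul_eq_mul, Prod.neg_mk, Prod.mk.injEq]
    constructor
    · field_simp
      ring
    · rw [hc]
      field_simp
      linear_combination (2 * s x + 2 * r x * y) * hcx
end
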